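/- The integral R := ∫₀^1 dx/(1 − x³)^{2/3} equals ∫₀^∞ dy/√(4y³ + 1). -/

import Mathlib

open Real Set MeasureTheory

noncomputable def Rf (x : ℝ) : ℝ := x / (1 - x^3) ^ ((2:ℝ)/3)
noncomputable def Rf' (x : ℝ) : ℝ := (1 + x^3) / (1 - x^3) ^ ((5:ℝ)/3)

lemma cube_lt_one {x : ℝ} (hx : x < 1) : x^3 < 1 := by
  nlinarith [sq_nonneg x, sq_nonneg (x+1), sq_nonneg (x-1)]

lemma Rf_deriv {x : ℝ} (hx : x ∈ Ioo (0:ℝ) 1) : HasDerivAt Rf (Rf' x) x := by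
  obtain ⟨hx0, hx1⟩ := hx
  have ht : (0:ℝ) < 1 - x^3 := by linarith [cube_lt_one hx1]
  set t : ℝ := 1 - x^3 with htdef
  have h1 : HasDerivAt (fun x : ℝ => 1 - x^3) (-(3*x^2)) x := by
    have := (hasDerivAt_pow 3 x).const_sub 1
    simpa using this
  have h2 : HasDerivAt (fun x : ℝ => (1 - x^3) ^ ((2:ℝ)/3))
      ((2/3) * t ^ ((2:ℝ)/3 - 1) * (-(3*x^2))) x :=
    by have h0 := (Real.hasDerivAt_rpow_const (x := t) (p := (2:ℝ)/3) (Or.inl ht.ne')).comp x h1; exact h0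
  have hden : t ^ ((2:ℝ)/3) ≠ 0 := (Real.rpow_pos_of_pos ht _).ne'
  have h3 := (hasDerivAt_id x).div h2 hden
  have heq : (1 * t ^ ((2:ℝ)/3) - x * ((2/3) * t ^ ((2:ℝ)/3 - 1) * (-(3*x^2)))) /
      (t ^ ((2:ℝ)/3)) ^ 2 = Rf' x := by
    rw [Rf', ← htdef]
    rw [div_eq_div_iff (by positivity) (by positivity)]
    have e1 : (t ^ ((2:ℝ)/3)) ^ 2 = t ^ ((4:ℝ)/3) := by
      rw [← Real.rpow_natCast (t ^ ((2:ℝ)/3)) 2, ← Real.rpow_mul ht.le]; norm_num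
    have e2 : t ^ ((2:ℝ)/3 - 1) = t ^ (-(1:ℝ)/3) := by norm_num
    rw [e1, e2]
    have e3 : t ^ ((2:ℝ)/3) * t ^ ((5:ℝ)/3) = t * t ^ ((4:ℝ)/3) := by
      rw [← Real.rpow_add ht, show (2:ℝ)/3 + 5/3 = (1:ℝ) + 4/3 by norm_num,
        Real.rpow_add ht, Real.rpow_one]
    have e4 : t ^ (-(1:ℝ)/3) * t ^ ((5:ℝ)/3) = t ^ ((4:ℝ)/3) := by
      rw [← Real.rpow_add ht]; norm_num
    have : (1 * t ^ ((2:ℝ)/3) - x * (2/3 * t ^ (-(1:ℝ)/3) * -(3*x^2))) * t^((5:ℝ)/3)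
        = t ^ ((2:ℝ)/3) * t ^ ((5:ℝ)/3) + 2*x^3 * (t ^ (-(1:ℝ)/3) * t ^ ((5:ℝ)/3)) := by ring
    rw [this, e3, e4, htdef]; ring
  have : Rf = fun x => x / (1 - x^3) ^ ((2:ℝ)/3) := rfl
  rw [this]
  exact h3.congr_deriv heq

lemma Rf_cont : ContinuousOn Rf (Ico (0:ℝ) 1) := by
  apply ContinuousOn.div continuousOn_id
  · exact ((continuous_const.sub (continuous_pow 3)).rpow_const
      (fun x => Or.inr (by norm_num))).continuousOn
  · intro x hx
    have ht : (0:ℝ) < 1 - x^3 := by linarith [cube_lt_one hx.2]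
    exact (Real.rpow_pos_of_pos ht _).ne'

lemma Rf_mono : StrictMonoOn Rf (Ico (0:ℝ) 1) := by
  apply strictMonoOn_of_deriv_pos (convex_Ico 0 1) Rf_cont
  intro x hx
  rw [interior_Ico] at hx
  have ht : (0:ℝ) < 1 - x^3 := by linarith [cube_lt_one hx.2]
  rw [(Rf_deriv hx).deriv]
  have : (0:ℝ) < 1 + x^3 := by nlinarith [pow_pos hx.1 3]
  exact div_pos this (Real.rpow_pos_of_pos ht _)

lemma Rf_zero : Rf 0 = 0 := by simp [Rf]

lemma Rf_tendsto : Filter.Tendsto Rf (nhdsWithin 1 (Iio 1)) Filter.atTop := by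
  have hnum : Filter.Tendsto (fun x : ℝ => x) (nhdsWithin 1 (Iio 1)) (nhds 1) :=
    Filter.tendsto_id.mono_left nhdsWithin_le_nhds
  have hden : Filter.Tendsto (fun x : ℝ => ((1 - x^3) ^ ((2:ℝ)/3))⁻¹)
      (nhdsWithin 1 (Iio 1)) Filter.atTop := by
    apply Filter.Tendsto.inv_tendsto_nhdsGT_zero
    rw [tendsto_nhdsWithin_iff]
    constructor
    · have hc : Continuous (fun x : ℝ => (1 - x^3) ^ ((2:ℝ)/3)) :=
        (continuous_const.sub (continuous_pow 3)).rpow_const (fun x => Or.inr (by norm_num))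
      have := (hc.tendsto 1).mono_left (nhdsWithin_le_nhds (s := Iio (1:ℝ)))
      simpa using this
    · filter_upwards [self_mem_nhdsWithin] with x hx
      have ht : (0:ℝ) < 1 - x^3 := by linarith [cube_lt_one hx]
      exact Real.rpow_pos_of_pos ht _
  have := Filter.Tendsto.pos_mul_atTop one_pos hnum hden
  rw [show Rf = fun x : ℝ => x * ((1 - x^3) ^ ((2:ℝ)/3))⁻¹ from funext fun x => div_eq_mul_inv _ _]
  exact this

lemma Rf_image : Rf '' Ioo (0:ℝ) 1 = Ioi (0:ℝ) := by
  apply Subset.antisymm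
  · rintro _ ⟨x, hx, rfl⟩
    have ht : (0:ℝ) < 1 - x^3 := by linarith [cube_lt_one hx.2]
    exact div_pos hx.1 (Real.rpow_pos_of_pos ht _)
  · intro y hy
    have hb : ∃ b, b ∈ Ioo (0:ℝ) 1 ∧ y < Rf b := by
      have h1 : ∀ᶠ x in nhdsWithin 1 (Iio (1:ℝ)), y < Rf x := Rf_tendsto.eventually_gt_atTop y
      have h2 : ∀ᶠ x in nhdsWithin 1 (Iio (1:ℝ)), x ∈ Ioo (0:ℝ) 1 := by
        have : ∀ᶠ x in nhds (1:ℝ), (0:ℝ) < x :=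
          Filter.Tendsto.eventually_const_lt (by norm_num) Filter.tendsto_id
        filter_upwards [self_mem_nhdsWithin, this.filter_mono nhdsWithin_le_nhds]
          with x hx hx0
        exact ⟨hx0, hx⟩
      obtain ⟨b, hb1, hb2⟩ := (h2.and h1).exists
      exact ⟨b, hb1, hb2⟩
    obtain ⟨b, hb, hyb⟩ := hb
    have hsub : Icc (0:ℝ) b ⊆ Ico (0:ℝ) 1 := fun z hz => ⟨hz.1, lt_of_le_of_lt hz.2 hb.2⟩
    have := intermediate_value_Ioo hb.1.le (Rf_cont.mono hsub)
    have hy' : y ∈ Ioo (Rf 0) (Rf b) := ⟨by rw [Rf_zero]; exact hy, hyb⟩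
    obtain ⟨x, hx, hxy⟩ := this hy'
    exact ⟨x, ⟨hx.1, lt_trans hx.2 hb.2⟩, hxy⟩

lemma key_eq {x : ℝ} (hx : x ∈ Ioo (0:ℝ) 1) :
    |Rf' x| * (1 / Real.sqrt (4 * (Rf x)^3 + 1)) = 1 / (1 - x^3) ^ ((2:ℝ)/3) := by
  obtain ⟨hx0, hx1⟩ := hx
  have ht : (0:ℝ) < 1 - x^3 := by linarith [cube_lt_one hx1]
  have hp : (0:ℝ) < 1 + x^3 := by nlinarith [pow_pos hx0 3]
  have hcube : (Rf x)^3 = x^3 / (1-x^3)^(2:ℕ) := by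
    rw [Rf, div_pow, ← Real.rpow_natCast ((1-x^3) ^ ((2:ℝ)/3)) 3, ← Real.rpow_mul ht.le,
      ← Real.rpow_natCast (1-x^3) 2]
    norm_num
  have hs : Real.sqrt (4 * (Rf x)^3 + 1) = (1+x^3)/(1-x^3) := by
    rw [hcube]
    have h4 : 4 * (x^3 / (1-x^3)^(2:ℕ)) + 1 = ((1+x^3)/(1-x^3))^2 := by
      field_simp; ring
    rw [h4, Real.sqrt_sq (by positivity)]
  have habs : |Rf' x| = (1+x^3) / (1-x^3) ^ ((5:ℝ)/3) :=
    abs_of_pos (div_pos hp (Real.rpow_pos_of_pos ht _))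
  rw [habs, hs]
  have hr1 : (1-x^3) ^ ((2:ℝ)/3) ≠ 0 := (Real.rpow_pos_of_pos ht _).ne'
  have hr2 : (1-x^3) ^ ((5:ℝ)/3) ≠ 0 := (Real.rpow_pos_of_pos ht _).ne'
  have hmul : (1-x^3) * (1-x^3) ^ ((2:ℝ)/3) = (1-x^3) ^ ((5:ℝ)/3) := by
    rw [show (5:ℝ)/3 = 1 + 2/3 by norm_num, Real.rpow_add ht, Real.rpow_one]
  field_simp
  linear_combination hmul

theorem R_first_form :
    ∫ x in (0:ℝ)..1, 1 / (1 - x^3) ^ ((2:ℝ)/3)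
      = ∫ y in Set.Ioi (0:ℝ), 1 / Real.sqrt (4 * y^3 + 1) := by
  rw [intervalIntegral.integral_of_le zero_le_one,
    MeasureTheory.integral_Ioc_eq_integral_Ioo, ← Rf_image,
    MeasureTheory.integral_image_eq_integral_abs_deriv_smul measurableSet_Ioo
      (fun x hx => (Rf_deriv hx).hasDerivWithinAt)
      (Rf_mono.injOn.mono Ioo_subset_Ico_self)]
  apply MeasureTheory.setIntegral_congr_fun measurableSet_Ioo
  intro x hx
  simpa [smul_eq_mul] using (key_eq hx).symm
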